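/- For any L-tuple x = (x₁,…,x_L) of vectors in a real Hilbert space, the squared circumscribed radius satisfies rad(x)² = max over probability vectors ω on {1,…,L} of (1 − ‖∑ᵢ ωᵢ xᵢ‖²), provided all xᵢ are unit vectors; more generally rad(x)² = max_ω min_y E_{i∼ω}‖xᵢ − y‖² = 1 − min_ω V(ω) where V(ω) = ∑_{i,j} ⟨xᵢ,xⱼ⟩ ωᵢ ωⱼ is the Gram quadratic form, when ‖xᵢ‖ = 1 for all i. -/

import Mathlib

open scoped RealInnerProductSpace

open Finset in
private lemma stmt16_expand {E : Type*} [NormedAddCommGroup E] [InnerProductSpace ℝ E]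
    {L : ℕ} (x : Fin L → E) (hunit : ∀ i, ‖x i‖ = 1) (ω : Fin L → ℝ)
    (hsum : ∑ i, ω i = 1) (y : E) :
    ∑ i, ω i * ‖x i - y‖ ^ 2
      = 1 - ‖∑ i, ω i • x i‖ ^ 2 + ‖(∑ i, ω i • x i) - y‖ ^ 2 := by
  set c := ∑ i, ω i • x i with hc
  have hinner : ⟪c, y⟫ = ∑ i, ω i * ⟪x i, y⟫ := by
    rw [hc, sum_inner]
    exact Finset.sum_congr rfl fun i _ => real_inner_smul_left _ _ _
  have h1 : ∀ i, ‖x i - y‖ ^ 2 = 1 - 2 * ⟪x i, y⟫ + ‖y‖ ^ 2 := fun i => by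
    rw [norm_sub_sq_real, hunit i]; ring
  have h2 : ∑ i, ω i * ‖x i - y‖ ^ 2
      = (∑ i, ω i) * 1 - 2 * (∑ i, ω i * ⟪x i, y⟫) + (∑ i, ω i) * ‖y‖ ^ 2 := by
    rw [Finset.sum_mul, Finset.sum_mul, Finset.mul_sum]
    rw [← Finset.sum_sub_distrib, ← Finset.sum_add_distrib]
    exact Finset.sum_congr rfl fun i _ => by rw [h1 i]; ring
  rw [h2, hsum, ← hinner, norm_sub_sq_real c y]
  ring

/-- for unit vectors `x₁,…,x_L` in a real Hilbert space,
`rad(x)² = max_ω min_y E_{i∼ω}‖xᵢ-y‖² = max_ω (1 - ‖∑ ωᵢxᵢ‖²) = 1 - min_ω V(ω)`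
where `V` is the Gram quadratic form and `ω` ranges over probability vectors. -/
theorem stmt_16 {E : Type*} [NormedAddCommGroup E] [InnerProductSpace ℝ E]
    [CompleteSpace E] (L : ℕ) (hL : 0 < L) (x : Fin L → E)
    (hunit : ∀ i, ‖x i‖ = 1) :
    ((⨅ y : E, ⨆ i, ‖x i - y‖) ^ 2
        = ⨆ ω : {ω : Fin L → ℝ // (∀ i, 0 ≤ ω i) ∧ ∑ i, ω i = 1},
            ⨅ y : E, ∑ i, ω.1 i * ‖x i - y‖ ^ 2) ∧
    ((⨅ y : E, ⨆ i, ‖x i - y‖) ^ 2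
        = ⨆ ω : {ω : Fin L → ℝ // (∀ i, 0 ≤ ω i) ∧ ∑ i, ω i = 1},
            (1 - ‖∑ i, ω.1 i • x i‖ ^ 2)) ∧
    ((⨅ y : E, ⨆ i, ‖x i - y‖) ^ 2
        = 1 - ⨅ ω : {ω : Fin L → ℝ // (∀ i, 0 ≤ ω i) ∧ ∑ i, ω i = 1},
            ∑ i, ∑ j, ⟪x i, x j⟫ * ω.1 i * ω.1 j) := by
  haveI : Nonempty (Fin L) := ⟨⟨0, hL⟩⟩
  set Ωt := {ω : Fin L → ℝ // (∀ i, 0 ≤ ω i) ∧ ∑ i, ω i = 1} with hΩt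
  set f : E → ℝ := fun y => ⨆ i, ‖x i - y‖ with hf
  set rad : ℝ := ⨅ y : E, f y with hradd
  have hbdd : ∀ y : E, BddAbove (Set.range fun i => ‖x i - y‖) :=
    fun y => (Set.finite_range _).bddAbove
  have hfy : ∀ (y : E) (i : Fin L), ‖x i - y‖ ≤ f y := fun y i => le_ciSup (hbdd y) i
  have hf0 : ∀ y : E, 0 ≤ f y := fun y =>
    le_trans (norm_nonneg _) (hfy y ⟨0, hL⟩)
  have hbddB : BddBelow (Set.range f) := ⟨0, fun a ⟨y, hy⟩ => hy ▸ hf0 y⟩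
  have hradle : ∀ y : E, rad ≤ f y := fun y => ciInf_le hbddB y
  have hrad0 : 0 ≤ rad := le_ciInf hf0
  -- the inner infimum over y, computed explicitly
  have hinf : ∀ ω : Ωt, (⨅ y : E, ∑ i, ω.1 i * ‖x i - y‖ ^ 2)
      = 1 - ‖∑ i, ω.1 i • x i‖ ^ 2 := by
    intro ω
    have hlow : ∀ y : E, 1 - ‖∑ i, ω.1 i • x i‖ ^ 2 ≤ ∑ i, ω.1 i * ‖x i - y‖ ^ 2 := by
      intro y
      rw [stmt16_expand x hunit ω.1 ω.2.2 y]
      nlinarith [sq_nonneg ‖(∑ i, ω.1 i • x i) - y‖]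
    refine le_antisymm ?_ (le_ciInf hlow)
    have := ciInf_le (f := fun y : E => ∑ i, ω.1 i * ‖x i - y‖ ^ 2)
      ⟨1 - ‖∑ i, ω.1 i • x i‖ ^ 2, fun a ⟨y, hy⟩ => hy ▸ hlow y⟩ (∑ i, ω.1 i • x i)
    refine this.trans_eq ?_
    rw [stmt16_expand x hunit ω.1 ω.2.2]
    simp
  -- easy direction
  have heasy : ∀ ω : Ωt, 1 - ‖∑ i, ω.1 i • x i‖ ^ 2 ≤ rad ^ 2 := by
    intro ω
    have hΦy : ∀ y : E, 1 - ‖∑ i, ω.1 i • x i‖ ^ 2 ≤ f y ^ 2 := by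
      intro y
      have h1 : ∑ i, ω.1 i * ‖x i - y‖ ^ 2 ≤ ∑ i, ω.1 i * f y ^ 2 :=
        Finset.sum_le_sum fun i _ => mul_le_mul_of_nonneg_left
          (pow_le_pow_left₀ (norm_nonneg _) (hfy y i) 2) (ω.2.1 i)
      have h2 : ∑ i, ω.1 i * f y ^ 2 = f y ^ 2 := by
        rw [← Finset.sum_mul, ω.2.2, one_mul]
      calc 1 - ‖∑ i, ω.1 i • x i‖ ^ 2
          ≤ ∑ i, ω.1 i * ‖x i - y‖ ^ 2 := by
            rw [stmt16_expand x hunit ω.1 ω.2.2 y]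
            nlinarith [sq_nonneg ‖(∑ i, ω.1 i • x i) - y‖]
        _ ≤ f y ^ 2 := h1.trans_eq h2
    by_cases hΦ : 1 - ‖∑ i, ω.1 i • x i‖ ^ 2 ≤ 0
    · exact hΦ.trans (sq_nonneg rad)
    · push_neg at hΦ
      set t := 1 - ‖∑ i, ω.1 i • x i‖ ^ 2
      have hst : ∀ y : E, Real.sqrt t ≤ f y := by
        intro y
        have := Real.sqrt_le_sqrt (hΦy y)
        rwa [Real.sqrt_sq (hf0 y)] at this
      have h1 : Real.sqrt t ≤ rad := le_ciInf hst
      have := pow_le_pow_left₀ (Real.sqrt_nonneg t) h1 2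
      rwa [Real.sq_sqrt hΦ.le] at this
  -- existence of a maximizer of Φ on the simplex
  have hcont : Continuous fun ω : Fin L → ℝ => 1 - ‖∑ i, ω i • x i‖ ^ 2 := by
    refine continuous_const.sub ((Continuous.pow ?_ 2))
    exact (continuous_finset_sum _ fun i _ => (continuous_apply i).smul continuous_const).norm
  have hne : (stdSimplex ℝ (Fin L)).Nonempty := by
    refine ⟨fun i => if i = ⟨0, hL⟩ then 1 else 0, fun i => ?_, ?_⟩
    · by_cases h : i = ⟨0, hL⟩ <;> simp [h]
    · simp
  obtain ⟨ω0, hω0, hmax⟩ := (isCompact_stdSimplex ℝ (Fin L)).exists_isMaxOn hne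
    hcont.continuousOn
  have hω0p : ∀ i, 0 ≤ ω0 i := hω0.1
  have hω0s : ∑ i, ω0 i = 1 := hω0.2
  set y : E := ∑ i, ω0 i • x i with hy
  -- first-order optimality: ‖y‖² ≤ ⟪y, x i⟫
  have hkey : ∀ i : Fin L, ‖y‖ ^ 2 ≤ ⟪y, x i⟫ := by
    intro i
    set a : ℝ := ⟪y, x i⟫
    set b : ℝ := ‖y‖ ^ 2
    have hstep : ∀ n : ℕ, 0 ≤ 2 * a - 2 * b + (1 / (n + 1 : ℝ)) * (b - 2 * a + 1) := by
      intro n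
      set t : ℝ := 1 / (n + 1 : ℝ) with htd
      have ht0 : 0 < t := by positivity
      have ht1 : t ≤ 1 := by
        rw [htd]
        rw [div_le_one (by positivity)]
        exact le_add_of_nonneg_left (Nat.cast_nonneg n)
      set ωt : Fin L → ℝ := fun j => (1 - t) * ω0 j + t * (if j = i then 1 else 0) with hωt
      have hmem : ωt ∈ stdSimplex ℝ (Fin L) := by
        constructor
        · intro j
          have : (0:ℝ) ≤ (if j = i then (1:ℝ) else 0) := by split <;> norm_num
          have h1t : (0:ℝ) ≤ 1 - t := by linarith
          exact add_nonneg (mul_nonneg h1t (hω0p j)) (mul_nonneg ht0.le this)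
        · rw [hωt]
          rw [Finset.sum_add_distrib, ← Finset.mul_sum, ← Finset.mul_sum, hω0s]
          simp
      have hc : ∑ j, ωt j • x j = (1 - t) • y + t • x i := by
        rw [hωt]
        simp only [add_smul, Finset.sum_add_distrib, mul_smul]
        rw [← Finset.smul_sum, ← Finset.smul_sum, ← hy]
        congr 1
        congr 1
        rw [Finset.sum_congr rfl (fun j _ => by
          rw [show ((if j = i then (1:ℝ) else 0) • x j) = (if j = i then x j else 0) by
            split <;> simp])]
        simp
      have hle := hmax hmem
      simp only [Set.mem_setOf_eq, hc] at hle
      have hineq : b ≤ ‖(1 - t) • y + t • x i‖ ^ 2 := by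
        have : 1 - ‖(1 - t) • y + t • x i‖ ^ 2 ≤ 1 - ‖y‖ ^ 2 := hle
        simp only [b]; linarith
      have hexp : ‖(1 - t) • y + t • x i‖ ^ 2
          = (1 - t) ^ 2 * b + 2 * (t * (1 - t) * a) + t ^ 2 := by
        rw [norm_add_sq_real]
        rw [norm_smul, norm_smul, real_inner_smul_left, real_inner_smul_right]
        rw [hunit i]
        rw [Real.norm_eq_abs, Real.norm_eq_abs, abs_of_nonneg (by linarith : (0:ℝ) ≤ 1 - t),
          abs_of_nonneg ht0.le]
        simp only [a, b]
        ring
      rw [hexp] at hineq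
      have h0 : 0 ≤ t * (2 * a - 2 * b + t * (b - 2 * a + 1)) := by nlinarith
      exact (mul_nonneg_iff_of_pos_left ht0).mp h0
    have htend : Filter.Tendsto
        (fun n : ℕ => 2 * a - 2 * b + (1 / (n + 1 : ℝ)) * (b - 2 * a + 1))
        Filter.atTop (nhds (2 * a - 2 * b + 0 * (b - 2 * a + 1))) :=
      Filter.Tendsto.add tendsto_const_nhds
        (tendsto_one_div_add_atTop_nhds_zero_nat.mul_const _)
    have : (0:ℝ) ≤ 2 * a - 2 * b + 0 * (b - 2 * a + 1) :=
      ge_of_tendsto' htend hstep |>.trans_eq rfl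
    nlinarith
  -- hard direction: rad² ≤ 1 - ‖y‖²
  have hhard : rad ^ 2 ≤ 1 - ‖y‖ ^ 2 := by
    have hxi : ∀ i, ‖x i - y‖ ^ 2 ≤ 1 - ‖y‖ ^ 2 := by
      intro i
      rw [norm_sub_sq_real, hunit i]
      have := hkey i
      rw [real_inner_comm] at this
      nlinarith
    have h1y : 0 ≤ 1 - ‖y‖ ^ 2 := le_trans (sq_nonneg _) (hxi ⟨0, hL⟩)
    have hfyle : f y ≤ Real.sqrt (1 - ‖y‖ ^ 2) := by
      refine ciSup_le fun i => ?_
      have := Real.sqrt_le_sqrt (hxi i)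
      rwa [Real.sqrt_sq (norm_nonneg _)] at this
    have hr : rad ≤ Real.sqrt (1 - ‖y‖ ^ 2) := (hradle y).trans hfyle
    have := pow_le_pow_left₀ hrad0 hr 2
    rwa [Real.sq_sqrt h1y] at this
  set ωs : Ωt := ⟨ω0, hω0p, hω0s⟩ with hωs
  haveI : Nonempty Ωt := ⟨ωs⟩
  have hΦs : 1 - ‖∑ i, (ωs.1 i) • x i‖ ^ 2 = rad ^ 2 :=
    le_antisymm (heasy ωs) hhard
  have hbddA : BddAbove (Set.range fun ω : Ωt => 1 - ‖∑ i, ω.1 i • x i‖ ^ 2) :=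
    ⟨rad ^ 2, fun a ⟨ω, hω⟩ => hω ▸ heasy ω⟩
  have goal2 : rad ^ 2 = ⨆ ω : Ωt, (1 - ‖∑ i, ω.1 i • x i‖ ^ 2) :=
    le_antisymm (le_ciSup_of_le hbddA ωs hΦs.ge) (ciSup_le heasy)
  refine ⟨?_, goal2, ?_⟩
  · rw [goal2]
    exact (iSup_congr hinf).symm
  · -- Gram form
    have hV : ∀ ω : Ωt, ∑ i, ∑ j, ⟪x i, x j⟫ * ω.1 i * ω.1 j
        = ‖∑ i, ω.1 i • x i‖ ^ 2 := by
      intro ω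
      rw [← real_inner_self_eq_norm_sq, sum_inner]
      refine Finset.sum_congr rfl fun i _ => ?_
      rw [real_inner_smul_left, inner_sum, Finset.mul_sum]
      refine Finset.sum_congr rfl fun j _ => ?_
      rw [real_inner_smul_right]
      ring
    have hVle : ∀ ω : Ωt, 1 - rad ^ 2 ≤ ∑ i, ∑ j, ⟪x i, x j⟫ * ω.1 i * ω.1 j := by
      intro ω
      rw [hV ω]
      have := heasy ω
      linarith
    have hVs : ∑ i, ∑ j, ⟪x i, x j⟫ * ωs.1 i * ωs.1 j = 1 - rad ^ 2 := by
      rw [hV ωs]; linarith [hΦs]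
    have : (⨅ ω : Ωt, ∑ i, ∑ j, ⟪x i, x j⟫ * ω.1 i * ω.1 j) = 1 - rad ^ 2 := by
      refine le_antisymm ?_ (le_ciInf hVle)
      exact (ciInf_le ⟨1 - rad ^ 2, fun a ⟨ω, hω⟩ => hω ▸ hVle ω⟩ ωs).trans_eq hVs
    rw [this]; ring
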